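/- Let (X₁, X₂) be a bivariate Gaussian vector with mean zero, variances σ₁², σ₂² and covariance C₁₂, and let g : ℝ² → ℝ be three times continuously differentiable with all derivatives up to order three of polynomial growth. Then E[g(X₁,X₂)·X₁·X₂²] = (σ₁²σ₂² + 2C₁₂²)·E[∂₁g] + 3σ₂²C₁₂·E[∂₂g] + (2σ₁²σ₂²C₁₂ + C₁₂³)·E[∂₁²∂₂ g] + (σ₁²σ₂⁴ + 2σ₂²C₁₂²)·E[∂₁∂₂² g] + σ₁²C₁₂²·E[∂₁³ g] + σ₂⁴C₁₂·E[∂₂³ g]. -/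

import Mathlib

open MeasureTheory

/-- Density of the mean-zero bivariate normal distribution with variances `s1, s2`
and covariance `c` (here `s1 = σ₁²`, `s2 = σ₂²`). -/
noncomputable def gaussPdf2 (s1 s2 c : ℝ) (p : ℝ × ℝ) : ℝ :=
  (2 * Real.pi)⁻¹ * (s1 * s2 - c ^ 2) ^ (-(1 : ℝ) / 2) *
    Real.exp (-(1 / 2) * ((s2 * p.1 ^ 2 - 2 * c * p.1 * p.2 + s1 * p.2 ^ 2) /
      (s1 * s2 - c ^ 2)))

/-- The mean-zero bivariate Gaussian measure. -/
noncomputable def gaussMeasure2 (s1 s2 c : ℝ) : Measure (ℝ × ℝ) :=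
  volume.withDensity fun p => ENNReal.ofReal (gaussPdf2 s1 s2 c p)

/-- Partial derivative with respect to the first argument. -/
noncomputable def pd1 (g : ℝ × ℝ → ℝ) : ℝ × ℝ → ℝ :=
  fun p => deriv (fun t => g (t, p.2)) p.1

/-- Partial derivative with respect to the second argument. -/
noncomputable def pd2 (g : ℝ × ℝ → ℝ) : ℝ × ℝ → ℝ :=
  fun p => deriv (fun t => g (p.1, t)) p.2

open Real Filter Topology



theorem gaussPdf2_pos {A B C : ℝ} (hD : 0 < A * B - C ^ 2) (p : ℝ × ℝ) :
    0 < gaussPdf2 A B C p :=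
  mul_pos (mul_pos (inv_pos.2 (by positivity)) (Real.rpow_pos_of_pos hD _)) (Real.exp_pos _)

theorem gaussPdf2_continuous (A B C : ℝ) : Continuous (gaussPdf2 A B C) := by
  unfold gaussPdf2; fun_prop

theorem quad_ge1 {A B C : ℝ} (hA : 0 < A) (x y : ℝ) :
    (A * B - C ^ 2) * x ^ 2 ≤ A * (B * x ^ 2 - 2 * C * x * y + A * y ^ 2) := by
  nlinarith [sq_nonneg (C * x - A * y)]

theorem quad_ge2 {A B C : ℝ} (hB : 0 < B) (x y : ℝ) :
    (A * B - C ^ 2) * y ^ 2 ≤ B * (B * x ^ 2 - 2 * C * x * y + A * y ^ 2) := by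
  nlinarith [sq_nonneg (C * y - B * x)]

theorem quad_ge {A B C : ℝ} (hA : 0 < A) (hB : 0 < B) (hD : 0 < A * B - C ^ 2) (x y : ℝ) :
    (4 * max A B)⁻¹ * x ^ 2 + (4 * max A B)⁻¹ * y ^ 2
      ≤ (1 / 2) * ((B * x ^ 2 - 2 * C * x * y + A * y ^ 2) / (A * B - C ^ 2)) := by
  set q := B * x ^ 2 - 2 * C * x * y + A * y ^ 2 with hqdef
  set M := max A B with hMdef
  have hM : 0 < M := lt_max_of_lt_left hA
  have h1 := quad_ge1 (B := B) (C := C) hA x y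
  have h2 := quad_ge2 (A := A) (C := C) hB x y
  have hq : 0 ≤ q := by nlinarith [mul_nonneg hD.le (sq_nonneg x)]
  have s1 : (A * B - C ^ 2) * x ^ 2 ≤ M * q :=
    h1.trans (mul_le_mul_of_nonneg_right (le_max_left _ _) hq)
  have s2 : (A * B - C ^ 2) * y ^ 2 ≤ M * q :=
    h2.trans (mul_le_mul_of_nonneg_right (le_max_right _ _) hq)
  rw [← mul_div_assoc, le_div_iff₀ hD]
  have hminv : (0:ℝ) ≤ (4 * M)⁻¹ := by positivity
  calc ((4 * M)⁻¹ * x ^ 2 + (4 * M)⁻¹ * y ^ 2) * (A * B - C ^ 2)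
      = (4 * M)⁻¹ * ((A * B - C ^ 2) * x ^ 2 + (A * B - C ^ 2) * y ^ 2) := by ring
    _ ≤ (4 * M)⁻¹ * (M * q + M * q) := by gcongr
    _ = 1 / 2 * q := by field_simp; ring

theorem gaussPdf2_le {A B C : ℝ} (hA : 0 < A) (hB : 0 < B) (hD : 0 < A * B - C ^ 2)
    (p : ℝ × ℝ) :
    gaussPdf2 A B C p ≤ (2 * Real.pi)⁻¹ * (A * B - C ^ 2) ^ (-(1 : ℝ) / 2) *
      (Real.exp (-((4 * max A B)⁻¹) * p.1 ^ 2) * Real.exp (-((4 * max A B)⁻¹) * p.2 ^ 2)) := by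
  unfold gaussPdf2
  rw [mul_le_mul_iff_right₀ (by positivity), ← Real.exp_add]
  apply Real.exp_le_exp.2
  have := quad_ge hA hB hD p.1 p.2
  linarith

theorem hasDerivAt_gaussPdf2_fst {A B C : ℝ} (x y : ℝ) :
    HasDerivAt (fun t => gaussPdf2 A B C (t, y))
      (gaussPdf2 A B C (x, y) * (-((B * x - C * y) / (A * B - C ^ 2)))) x := by
  unfold gaussPdf2
  simp only
  have h : HasDerivAt (fun t : ℝ => -(1/2) * ((B * t ^ 2 - 2 * C * t * y + A * y ^ 2) / (A * B - C ^ 2)))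
      (-((B * x - C * y) / (A * B - C ^ 2))) x := by
    have : HasDerivAt (fun t : ℝ => B * t ^ 2 - 2 * C * t * y + A * y ^ 2)
        (B * (2 * x) - 2 * C * y) x := by
      simpa using (((hasDerivAt_pow 2 x).const_mul B).sub
        (((hasDerivAt_id x).const_mul (2 * C)).mul_const y)).add_const (A * y ^ 2)
    have h2 := (this.div_const (A * B - C ^ 2)).const_mul (-(1/2 : ℝ))
    exact h2.congr_deriv (by ring)
  have := (h.exp).const_mul ((2 * Real.pi)⁻¹ * (A * B - C ^ 2) ^ (-(1 : ℝ) / 2))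
  exact this.congr_deriv (by ring)

theorem hasDerivAt_gaussPdf2_snd {A B C : ℝ} (x y : ℝ) :
    HasDerivAt (fun t => gaussPdf2 A B C (x, t))
      (gaussPdf2 A B C (x, y) * (-((A * y - C * x) / (A * B - C ^ 2)))) y := by
  unfold gaussPdf2
  simp only
  have h : HasDerivAt (fun t : ℝ => -(1/2) * ((B * x ^ 2 - 2 * C * x * t + A * t ^ 2) / (A * B - C ^ 2)))
      (-((A * y - C * x) / (A * B - C ^ 2))) y := by
    have : HasDerivAt (fun t : ℝ => B * x ^ 2 - 2 * C * x * t + A * t ^ 2)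
        (-(2 * C * x) + A * (2 * y)) y := by
      simpa [Pi.add_def, Pi.sub_def] using ((hasDerivAt_const y (B * x ^ 2)).sub
        ((hasDerivAt_id y).const_mul (2 * C * x))).add ((hasDerivAt_pow 2 y).const_mul A)
    have h2 := (this.div_const (A * B - C ^ 2)).const_mul (-(1/2 : ℝ))
    exact h2.congr_deriv (by ring)
  have := (h.exp).const_mul ((2 * Real.pi)⁻¹ * (A * B - C ^ 2) ^ (-(1 : ℝ) / 2))
  exact this.congr_deriv (by ring)

theorem poly_le_exp {b : ℝ} (hb : 0 < b) (n : ℕ) (t : ℝ) :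
    (1 + |t|) ^ n ≤ Real.exp ((n:ℝ)^2 / (2*b)) * Real.exp (b/2 * t^2) := by
  have h1 : (1 + |t|) ^ n ≤ Real.exp ((n:ℝ) * |t|) := by
    rw [Real.exp_nat_mul]
    exact pow_le_pow_left₀ (by positivity) (by linarith [Real.add_one_le_exp |t|]) n
  have h2 : (n:ℝ) * |t| ≤ (n:ℝ)^2 / (2*b) + b/2 * t^2 := by
    have hs := sq_nonneg (b * |t| - n)
    have ht : |t|^2 = t^2 := sq_abs t
    have hs' : 0 ≤ b^2*t^2 - 2*b*(n:ℝ)*|t| + (n:ℝ)^2 := by rw [← sq_abs t]; nlinarith [hs]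
    rw [div_add' _ _ _ (by positivity), le_div_iff₀ (by positivity)]
    nlinarith [hs', abs_nonneg t]
  calc (1 + |t|) ^ n ≤ Real.exp ((n:ℝ) * |t|) := h1
    _ ≤ Real.exp ((n:ℝ)^2 / (2*b) + b/2 * t^2) := Real.exp_le_exp.2 h2
    _ = _ := Real.exp_add _ _

theorem poly_mul_exp_le {b : ℝ} (hb : 0 < b) (n : ℕ) (t : ℝ) :
    (1 + |t|) ^ n * Real.exp (-b * t^2) ≤ Real.exp ((n:ℝ)^2 / (2*b)) * Real.exp (-(b/2) * t^2) := by
  calc (1 + |t|) ^ n * Real.exp (-b * t^2)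
      ≤ (Real.exp ((n:ℝ)^2 / (2*b)) * Real.exp (b/2 * t^2)) * Real.exp (-b * t^2) := by
        exact mul_le_mul_of_nonneg_right (poly_le_exp hb n t) (Real.exp_pos _).le
    _ = Real.exp ((n:ℝ)^2 / (2*b)) * Real.exp (-(b/2) * t^2) := by
        rw [mul_assoc, ← Real.exp_add]; ring_nf

theorem integrable_poly_mul_exp {b : ℝ} (hb : 0 < b) (n : ℕ) :
    Integrable (fun t : ℝ => (1 + |t|) ^ n * Real.exp (-b * t^2)) := by
  apply Integrable.mono' ((integrable_exp_neg_mul_sq (half_pos hb)).const_mul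
    (Real.exp ((n:ℝ)^2 / (2*b))))
  · exact Continuous.aestronglyMeasurable (by fun_prop)
  · filter_upwards with t
    rw [Real.norm_eq_abs, abs_of_nonneg (by positivity)]
    exact poly_mul_exp_le hb n t

theorem tendsto_poly_mul_exp {b : ℝ} (hb : 0 < b) (n : ℕ) {l : Filter ℝ}
    (hl : Tendsto (fun t : ℝ => |t|) l atTop) :
    Tendsto (fun t : ℝ => (1 + |t|) ^ n * Real.exp (-b * t^2)) l (𝓝 0) := by
  apply squeeze_zero (fun t => by positivity)
    (g := fun t => Real.exp ((n:ℝ)^2 / (2*b)) * Real.exp (-(b/2) * |t|^2))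
  · intro t
    rw [sq_abs]
    exact poly_mul_exp_le hb n t
  · rw [show (0:ℝ) = Real.exp ((n:ℝ)^2 / (2*b)) * 0 by ring]
    apply Tendsto.const_mul
    apply (Real.tendsto_exp_atBot).comp
    have h2 : Tendsto (fun s : ℝ => b/2 * s^2) atTop atTop :=
      (tendsto_pow_atTop (two_ne_zero)).const_mul_atTop (half_pos hb)
    have h3 := tendsto_neg_atTop_atBot.comp (h2.comp hl)
    exact h3.congr (fun t => by simp)

theorem one_add_norm_le (p : ℝ × ℝ) : 1 + ‖p‖ ≤ (1 + |p.1|) * (1 + |p.2|) := by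
  rw [Prod.norm_def, Real.norm_eq_abs, Real.norm_eq_abs]
  rcases max_cases |p.1| |p.2| with ⟨h, _⟩ | ⟨h, _⟩ <;> rw [h] <;>
    nlinarith [abs_nonneg p.1, abs_nonneg p.2]

theorem one_add_norm_pow_le (n : ℕ) (p : ℝ × ℝ) :
    (1 + ‖p‖) ^ n ≤ (1 + |p.1|) ^ n * (1 + |p.2|) ^ n := by
  rw [← mul_pow]
  exact pow_le_pow_left₀ (by positivity) (one_add_norm_le p) n

theorem integrable_exp_prod {b : ℝ} (hb : 0 < b) :
    Integrable (fun p : ℝ × ℝ => Real.exp (-b * p.1^2) * Real.exp (-b * p.2^2)) := by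
  rw [Measure.volume_eq_prod]
  exact (integrable_exp_neg_mul_sq hb).mul_prod (integrable_exp_neg_mul_sq hb)

theorem integrable_poly_exp_prod {b : ℝ} (hb : 0 < b) (n : ℕ) :
    Integrable (fun p : ℝ × ℝ =>
      ((1 + |p.1|) ^ n * Real.exp (-b * p.1^2)) * ((1 + |p.2|) ^ n * Real.exp (-b * p.2^2))) := by
  rw [Measure.volume_eq_prod]
  exact (integrable_poly_mul_exp hb n).mul_prod (integrable_poly_mul_exp hb n)

/-- main integrability lemma -/
theorem integrable_poly_mul_gaussPdf2 {A B C : ℝ} (hA : 0 < A) (hB : 0 < B)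
    (hD : 0 < A * B - C ^ 2) {f : ℝ × ℝ → ℝ} (hf : Continuous f) {c : ℝ} {n : ℕ}
    (hgr : ∀ p, |f p| ≤ c * (1 + ‖p‖) ^ n) :
    Integrable (fun p => f p * gaussPdf2 A B C p) := by
  set b : ℝ := (4 * max A B)⁻¹ with hbdef
  have hb : 0 < b := by positivity
  set K : ℝ := (2 * Real.pi)⁻¹ * (A * B - C ^ 2) ^ (-(1 : ℝ) / 2) with hKdef
  have hK : 0 < K := mul_pos (inv_pos.2 (by positivity)) (Real.rpow_pos_of_pos hD _)
  have hc : 0 ≤ c := by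
    have h0 := hgr 0
    have : (0:ℝ) ≤ c * (1 + ‖(0 : ℝ × ℝ)‖) ^ n := le_trans (abs_nonneg _) h0
    simpa using this
  apply Integrable.mono' (((integrable_poly_exp_prod hb n).const_mul (c * K)))
  · exact Continuous.aestronglyMeasurable (by exact hf.mul (gaussPdf2_continuous A B C))
  · filter_upwards with p
    rw [Real.norm_eq_abs, abs_mul, abs_of_pos (gaussPdf2_pos hD p)]
    calc |f p| * gaussPdf2 A B C p
        ≤ (c * (1 + ‖p‖) ^ n) * (K * (Real.exp (-b * p.1 ^ 2) * Real.exp (-b * p.2 ^ 2))) := by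
          apply mul_le_mul (hgr p) ?_ (le_of_lt (gaussPdf2_pos hD p)) (by positivity)
          exact gaussPdf2_le hA hB hD p
      _ ≤ (c * ((1 + |p.1|) ^ n * (1 + |p.2|) ^ n)) *
            (K * (Real.exp (-b * p.1 ^ 2) * Real.exp (-b * p.2 ^ 2))) := by
          gcongr
          exact one_add_norm_pow_le n p
      _ = c * K * (((1 + |p.1|) ^ n * Real.exp (-b * p.1^2)) *
            ((1 + |p.2|) ^ n * Real.exp (-b * p.2^2))) := by ring

/-- slice integrability in the first variable -/
theorem integrable_slice_fst {A B C : ℝ} (hA : 0 < A) (hB : 0 < B)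
    (hD : 0 < A * B - C ^ 2) {f : ℝ × ℝ → ℝ} (hf : Continuous f) {c : ℝ} {n : ℕ}
    (hgr : ∀ p, |f p| ≤ c * (1 + ‖p‖) ^ n) (y : ℝ) :
    Integrable (fun t => f (t, y) * gaussPdf2 A B C (t, y)) := by
  have hcont : Continuous fun t => f (t, y) * gaussPdf2 A B C (t, y) :=
    (hf.comp (by fun_prop)).mul ((gaussPdf2_continuous A B C).comp (by fun_prop))
  set b : ℝ := (4 * max A B)⁻¹ with hbdef
  have hb : 0 < b := by positivity
  set K : ℝ := (2 * Real.pi)⁻¹ * (A * B - C ^ 2) ^ (-(1 : ℝ) / 2) with hKdef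
  have hK : 0 < K := mul_pos (inv_pos.2 (by positivity)) (Real.rpow_pos_of_pos hD _)
  have hc : 0 ≤ c := by
    have h0 := hgr 0
    have : (0:ℝ) ≤ c * (1 + ‖(0 : ℝ × ℝ)‖) ^ n := le_trans (abs_nonneg _) h0
    simpa using this
  apply Integrable.mono' ((integrable_poly_mul_exp hb n).const_mul (c * (1 + |y|)^n * K))
  · exact hcont.aestronglyMeasurable
  · filter_upwards with t
    rw [Real.norm_eq_abs, abs_mul, abs_of_pos (gaussPdf2_pos hD _)]
    calc |f (t, y)| * gaussPdf2 A B C (t, y)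
        ≤ (c * ((1 + |t|) ^ n * (1 + |y|) ^ n)) *
            (K * (Real.exp (-b * t ^ 2) * Real.exp (-b * y ^ 2))) := by
          apply mul_le_mul ((hgr (t,y)).trans ?_) ?_ (le_of_lt (gaussPdf2_pos hD _)) (by positivity)
          · gcongr
            exact one_add_norm_pow_le n (t, y)
          · exact gaussPdf2_le hA hB hD (t, y)
      _ ≤ (c * ((1 + |t|) ^ n * (1 + |y|) ^ n)) * (K * (Real.exp (-b * t ^ 2) * 1)) := by
          gcongr
          exact Real.exp_le_one_iff.2 (by nlinarith [sq_nonneg y, hb])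
      _ = c * (1 + |y|)^n * K * ((1 + |t|) ^ n * Real.exp (-b * t^2)) := by ring

/-- slice integrability in the second variable -/
theorem integrable_slice_snd {A B C : ℝ} (hA : 0 < A) (hB : 0 < B)
    (hD : 0 < A * B - C ^ 2) {f : ℝ × ℝ → ℝ} (hf : Continuous f) {c : ℝ} {n : ℕ}
    (hgr : ∀ p, |f p| ≤ c * (1 + ‖p‖) ^ n) (x : ℝ) :
    Integrable (fun t => f (x, t) * gaussPdf2 A B C (x, t)) := by
  have hcont : Continuous fun t => f (x, t) * gaussPdf2 A B C (x, t) :=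
    (hf.comp (by fun_prop)).mul ((gaussPdf2_continuous A B C).comp (by fun_prop))
  set b : ℝ := (4 * max A B)⁻¹ with hbdef
  have hb : 0 < b := by positivity
  set K : ℝ := (2 * Real.pi)⁻¹ * (A * B - C ^ 2) ^ (-(1 : ℝ) / 2) with hKdef
  have hK : 0 < K := mul_pos (inv_pos.2 (by positivity)) (Real.rpow_pos_of_pos hD _)
  have hc : 0 ≤ c := by
    have h0 := hgr 0
    have : (0:ℝ) ≤ c * (1 + ‖(0 : ℝ × ℝ)‖) ^ n := le_trans (abs_nonneg _) h0
    simpa using this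
  apply Integrable.mono' ((integrable_poly_mul_exp hb n).const_mul (c * (1 + |x|)^n * K))
  · exact hcont.aestronglyMeasurable
  · filter_upwards with t
    rw [Real.norm_eq_abs, abs_mul, abs_of_pos (gaussPdf2_pos hD _)]
    calc |f (x, t)| * gaussPdf2 A B C (x, t)
        ≤ (c * ((1 + |x|) ^ n * (1 + |t|) ^ n)) *
            (K * (Real.exp (-b * x ^ 2) * Real.exp (-b * t ^ 2))) := by
          apply mul_le_mul ((hgr (x,t)).trans ?_) ?_ (le_of_lt (gaussPdf2_pos hD _)) (by positivity)
          · gcongr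
            exact one_add_norm_pow_le n (x, t)
          · exact gaussPdf2_le hA hB hD (x, t)
      _ ≤ (c * ((1 + |x|) ^ n * (1 + |t|) ^ n)) * (K * (1 * Real.exp (-b * t ^ 2))) := by
          gcongr
          exact Real.exp_le_one_iff.2 (by nlinarith [sq_nonneg x, hb])
      _ = c * (1 + |x|)^n * K * ((1 + |t|) ^ n * Real.exp (-b * t^2)) := by ring



theorem hasDerivAt_slice_fst {f : ℝ × ℝ → ℝ} {x y : ℝ}
    (hf : DifferentiableAt ℝ f (x, y)) :
    HasDerivAt (fun t => f (t, y)) (fderiv ℝ f (x, y) (1, 0)) x := by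
  have h : HasDerivAt (fun t : ℝ => (t, y)) ((1 : ℝ), (0 : ℝ)) x :=
    (hasDerivAt_id x).prodMk (hasDerivAt_const x y)
  exact hf.hasFDerivAt.comp_hasDerivAt x h

theorem hasDerivAt_slice_snd {f : ℝ × ℝ → ℝ} {x y : ℝ}
    (hf : DifferentiableAt ℝ f (x, y)) :
    HasDerivAt (fun t => f (x, t)) (fderiv ℝ f (x, y) (0, 1)) y := by
  have h : HasDerivAt (fun t : ℝ => (x, t)) ((0 : ℝ), (1 : ℝ)) y :=
    (hasDerivAt_const y x).prodMk (hasDerivAt_id y)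
  exact hf.hasFDerivAt.comp_hasDerivAt y h

theorem pd1_eq {f : ℝ × ℝ → ℝ} (hf : Differentiable ℝ f) :
    pd1 f = fun p => fderiv ℝ f p (1, 0) := by
  funext p
  exact (hasDerivAt_slice_fst (hf (p.1, p.2))).deriv

theorem pd2_eq {f : ℝ × ℝ → ℝ} (hf : Differentiable ℝ f) :
    pd2 f = fun p => fderiv ℝ f p (0, 1) := by
  funext p
  exact (hasDerivAt_slice_snd (hf (p.1, p.2))).deriv

theorem hasDerivAt_pd1 {f : ℝ × ℝ → ℝ} (hf : Differentiable ℝ f) (x y : ℝ) :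
    HasDerivAt (fun t => f (t, y)) (pd1 f (x, y)) x := by
  rw [pd1_eq hf]; exact hasDerivAt_slice_fst (hf (x, y))

theorem hasDerivAt_pd2 {f : ℝ × ℝ → ℝ} (hf : Differentiable ℝ f) (x y : ℝ) :
    HasDerivAt (fun t => f (x, t)) (pd2 f (x, y)) y := by
  rw [pd2_eq hf]; exact hasDerivAt_slice_snd (hf (x, y))

theorem contDiff_pd1 {f : ℝ × ℝ → ℝ} {N : WithTop ℕ∞} {n : ℕ} (hf : ContDiff ℝ N f)
    (h : (n : WithTop ℕ∞) + 1 ≤ N) : ContDiff ℝ n (pd1 f) := by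
  have h1 : (1 : WithTop ℕ∞) ≤ N := le_trans (by simp) h
  rw [pd1_eq (hf.differentiable (zero_lt_one.trans_le h1).ne')]
  exact (hf.fderiv_right h).clm_apply contDiff_const

theorem contDiff_pd2 {f : ℝ × ℝ → ℝ} {N : WithTop ℕ∞} {n : ℕ} (hf : ContDiff ℝ N f)
    (h : (n : WithTop ℕ∞) + 1 ≤ N) : ContDiff ℝ n (pd2 f) := by
  have h1 : (1 : WithTop ℕ∞) ≤ N := le_trans (by simp) h
  rw [pd2_eq (hf.differentiable (zero_lt_one.trans_le h1).ne')]
  exact (hf.fderiv_right h).clm_apply contDiff_const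

theorem norm_e1 : ‖((1 : ℝ), (0 : ℝ))‖ = 1 := by
  rw [Prod.norm_def]; simp

theorem norm_e2 : ‖((0 : ℝ), (1 : ℝ))‖ = 1 := by
  rw [Prod.norm_def]; simp

theorem abs_pd1_le {f : ℝ × ℝ → ℝ} (hf : Differentiable ℝ f) (p : ℝ × ℝ) :
    |pd1 f p| ≤ ‖iteratedFDeriv ℝ 1 f p‖ := by
  rw [pd1_eq hf]
  calc |fderiv ℝ f p (1, 0)| ≤ ‖fderiv ℝ f p‖ * ‖((1:ℝ), (0:ℝ))‖ :=
        (fderiv ℝ f p).le_opNorm _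
    _ = ‖iteratedFDeriv ℝ 1 f p‖ := by
        rw [norm_e1, mul_one, ← norm_iteratedFDeriv_fderiv (n := 0), norm_iteratedFDeriv_zero]

theorem abs_pd2_le {f : ℝ × ℝ → ℝ} (hf : Differentiable ℝ f) (p : ℝ × ℝ) :
    |pd2 f p| ≤ ‖iteratedFDeriv ℝ 1 f p‖ := by
  rw [pd2_eq hf]
  calc |fderiv ℝ f p (0, 1)| ≤ ‖fderiv ℝ f p‖ * ‖((0:ℝ), (1:ℝ))‖ :=
        (fderiv ℝ f p).le_opNorm _
    _ = ‖iteratedFDeriv ℝ 1 f p‖ := by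
        rw [norm_e2, mul_one, ← norm_iteratedFDeriv_fderiv (n := 0), norm_iteratedFDeriv_zero]

theorem norm_iteratedFDeriv_pd1_le {f : ℝ × ℝ → ℝ} {N : WithTop ℕ∞} {n : ℕ}
    (hf : ContDiff ℝ N f) (h : (n : WithTop ℕ∞) + 1 ≤ N) (p : ℝ × ℝ) :
    ‖iteratedFDeriv ℝ n (pd1 f) p‖ ≤ ‖iteratedFDeriv ℝ (n + 1) f p‖ := by
  have h1 : (1 : WithTop ℕ∞) ≤ N := le_trans (by simp) h
  rw [pd1_eq (hf.differentiable (zero_lt_one.trans_le h1).ne')]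
  calc ‖iteratedFDeriv ℝ n (fun p => fderiv ℝ f p (1, 0)) p‖
      ≤ ‖((1:ℝ), (0:ℝ))‖ * ‖iteratedFDeriv ℝ n (fderiv ℝ f) p‖ :=
        norm_iteratedFDeriv_clm_apply_const (hf.fderiv_right h).contDiffAt le_rfl
    _ = ‖iteratedFDeriv ℝ (n + 1) f p‖ := by rw [norm_e1, one_mul, norm_iteratedFDeriv_fderiv]

theorem norm_iteratedFDeriv_pd2_le {f : ℝ × ℝ → ℝ} {N : WithTop ℕ∞} {n : ℕ}
    (hf : ContDiff ℝ N f) (h : (n : WithTop ℕ∞) + 1 ≤ N) (p : ℝ × ℝ) :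
    ‖iteratedFDeriv ℝ n (pd2 f) p‖ ≤ ‖iteratedFDeriv ℝ (n + 1) f p‖ := by
  have h1 : (1 : WithTop ℕ∞) ≤ N := le_trans (by simp) h
  rw [pd2_eq (hf.differentiable (zero_lt_one.trans_le h1).ne')]
  calc ‖iteratedFDeriv ℝ n (fun p => fderiv ℝ f p (0, 1)) p‖
      ≤ ‖((0:ℝ), (1:ℝ))‖ * ‖iteratedFDeriv ℝ n (fderiv ℝ f) p‖ :=
        norm_iteratedFDeriv_clm_apply_const (hf.fderiv_right h).contDiffAt le_rfl
    _ = ‖iteratedFDeriv ℝ (n + 1) f p‖ := by rw [norm_e2, one_mul, norm_iteratedFDeriv_fderiv]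

theorem pd_comm {f : ℝ × ℝ → ℝ} {N : WithTop ℕ∞} (hf : ContDiff ℝ N f) (h : 2 ≤ N) :
    pd1 (pd2 f) = pd2 (pd1 f) := by
  have h1 : (1 : WithTop ℕ∞) ≤ N := le_trans (by norm_num) h
  have hd : Differentiable ℝ f := hf.differentiable (zero_lt_one.trans_le h1).ne'
  have hd2 : Differentiable ℝ (fderiv ℝ f) :=
    (hf.fderiv_right (m := 1) (by exact_mod_cast h)).differentiable one_ne_zero
  have hpd1 : Differentiable ℝ (pd1 f) := (contDiff_pd1 hf (by exact_mod_cast h)).differentiable (by norm_num)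
  have hpd2 : Differentiable ℝ (pd2 f) := (contDiff_pd2 hf (by exact_mod_cast h)).differentiable (by norm_num)
  funext p
  have hsymm : IsSymmSndFDerivAt ℝ f p :=
    (hf.contDiffAt).isSymmSndFDerivAt (by simpa [minSmoothness_of_isRCLikeNormedField] using h)
  rw [pd1_eq hpd2, pd2_eq hpd1, pd2_eq hd, pd1_eq hd]
  simp only
  rw [fderiv_clm_apply (hd2 p) (differentiableAt_const _),
    fderiv_clm_apply (hd2 p) (differentiableAt_const _)]
  simp [hsymm (1,0) (0,1)]

theorem abs_fst_le_one_add_norm (p : ℝ × ℝ) : |p.1| ≤ 1 + ‖p‖ :=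
  le_trans (norm_fst_le p) (by linarith [norm_nonneg p])

theorem abs_snd_le_one_add_norm (p : ℝ × ℝ) : |p.2| ≤ 1 + ‖p‖ :=
  le_trans (norm_snd_le p) (by linarith [norm_nonneg p])

theorem growth_nonneg {f : ℝ × ℝ → ℝ} {c : ℝ} {n : ℕ}
    (h0 : ∀ p, |f p| ≤ c * (1 + ‖p‖) ^ n) : 0 ≤ c := by
  have := le_trans (abs_nonneg (f 0)) (h0 0)
  simpa using this

theorem growth_mul_fst {f : ℝ × ℝ → ℝ} {c : ℝ} {n : ℕ}
    (h0 : ∀ p, |f p| ≤ c * (1 + ‖p‖) ^ n) :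
    ∀ p, |f p * p.1| ≤ c * (1 + ‖p‖) ^ (n + 1) := by
  intro p
  have hc := growth_nonneg h0
  rw [abs_mul, pow_succ, ← mul_assoc]
  exact mul_le_mul (h0 p) (abs_fst_le_one_add_norm p) (abs_nonneg _) (by positivity)

theorem growth_mul_snd {f : ℝ × ℝ → ℝ} {c : ℝ} {n : ℕ}
    (h0 : ∀ p, |f p| ≤ c * (1 + ‖p‖) ^ n) :
    ∀ p, |f p * p.2| ≤ c * (1 + ‖p‖) ^ (n + 1) := by
  intro p
  have hc := growth_nonneg h0
  rw [abs_mul, pow_succ, ← mul_assoc]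
  exact mul_le_mul (h0 p) (abs_snd_le_one_add_norm p) (abs_nonneg _) (by positivity)

theorem tendsto_slice_fst {A B C : ℝ} (hA : 0 < A) (hB : 0 < B)
    (hD : 0 < A * B - C ^ 2) {f : ℝ × ℝ → ℝ} {c : ℝ} {n : ℕ}
    (hgr : ∀ p, |f p| ≤ c * (1 + ‖p‖) ^ n) (y : ℝ) {l : Filter ℝ}
    (hl : Tendsto (fun t : ℝ => |t|) l atTop) :
    Tendsto (fun x => f (x, y) * gaussPdf2 A B C (x, y)) l (𝓝 0) := by
  set b : ℝ := (4 * max A B)⁻¹ with hbdef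
  have hb : 0 < b := by positivity
  set K : ℝ := (2 * Real.pi)⁻¹ * (A * B - C ^ 2) ^ (-(1 : ℝ) / 2) with hKdef
  have hK : 0 < K := mul_pos (inv_pos.2 (by positivity)) (Real.rpow_pos_of_pos hD _)
  have hc := growth_nonneg hgr
  apply squeeze_zero_norm (a := fun x => (c * (1 + |y|) ^ n * K) * ((1 + |x|) ^ n * Real.exp (-b * x ^ 2)))
  · intro x
    rw [Real.norm_eq_abs, abs_mul, abs_of_pos (gaussPdf2_pos hD _)]
    calc |f (x, y)| * gaussPdf2 A B C (x, y)
        ≤ (c * ((1 + |x|) ^ n * (1 + |y|) ^ n)) *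
            (K * (Real.exp (-b * x ^ 2) * Real.exp (-b * y ^ 2))) := by
          apply mul_le_mul ((hgr (x,y)).trans ?_) ?_ (le_of_lt (gaussPdf2_pos hD _)) (by positivity)
          · gcongr
            exact one_add_norm_pow_le n (x, y)
          · exact gaussPdf2_le hA hB hD (x, y)
      _ ≤ (c * ((1 + |x|) ^ n * (1 + |y|) ^ n)) * (K * (Real.exp (-b * x ^ 2) * 1)) := by
          gcongr
          exact Real.exp_le_one_iff.2 (by nlinarith [sq_nonneg y, hb])
      _ = (c * (1 + |y|) ^ n * K) * ((1 + |x|) ^ n * Real.exp (-b * x ^ 2)) := by ring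
  · simpa using (tendsto_poly_mul_exp hb n hl).const_mul (c * (1 + |y|) ^ n * K)

theorem tendsto_slice_snd {A B C : ℝ} (hA : 0 < A) (hB : 0 < B)
    (hD : 0 < A * B - C ^ 2) {f : ℝ × ℝ → ℝ} {c : ℝ} {n : ℕ}
    (hgr : ∀ p, |f p| ≤ c * (1 + ‖p‖) ^ n) (x : ℝ) {l : Filter ℝ}
    (hl : Tendsto (fun t : ℝ => |t|) l atTop) :
    Tendsto (fun t => f (x, t) * gaussPdf2 A B C (x, t)) l (𝓝 0) := by
  set b : ℝ := (4 * max A B)⁻¹ with hbdef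
  have hb : 0 < b := by positivity
  set K : ℝ := (2 * Real.pi)⁻¹ * (A * B - C ^ 2) ^ (-(1 : ℝ) / 2) with hKdef
  have hK : 0 < K := mul_pos (inv_pos.2 (by positivity)) (Real.rpow_pos_of_pos hD _)
  have hc := growth_nonneg hgr
  apply squeeze_zero_norm (a := fun t => (c * (1 + |x|) ^ n * K) * ((1 + |t|) ^ n * Real.exp (-b * t ^ 2)))
  · intro t
    rw [Real.norm_eq_abs, abs_mul, abs_of_pos (gaussPdf2_pos hD _)]
    calc |f (x, t)| * gaussPdf2 A B C (x, t)
        ≤ (c * ((1 + |x|) ^ n * (1 + |t|) ^ n)) *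
            (K * (Real.exp (-b * x ^ 2) * Real.exp (-b * t ^ 2))) := by
          apply mul_le_mul ((hgr (x,t)).trans ?_) ?_ (le_of_lt (gaussPdf2_pos hD _)) (by positivity)
          · gcongr
            exact one_add_norm_pow_le n (x, t)
          · exact gaussPdf2_le hA hB hD (x, t)
      _ ≤ (c * ((1 + |x|) ^ n * (1 + |t|) ^ n)) * (K * (1 * Real.exp (-b * t ^ 2))) := by
          gcongr
          exact Real.exp_le_one_iff.2 (by nlinarith [sq_nonneg x, hb])
      _ = (c * (1 + |x|) ^ n * K) * ((1 + |t|) ^ n * Real.exp (-b * t ^ 2)) := by ring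
  · simpa using (tendsto_poly_mul_exp hb n hl).const_mul (c * (1 + |x|) ^ n * K)

theorem linear_growth1 (B' C' : ℝ) (p : ℝ × ℝ) :
    |B' * p.1 - C' * p.2| ≤ (|B'| + |C'|) * (1 + ‖p‖) := by
  calc |B' * p.1 - C' * p.2| ≤ |B' * p.1| + |C' * p.2| := abs_sub _ _
    _ = |B'| * |p.1| + |C'| * |p.2| := by rw [abs_mul, abs_mul]
    _ ≤ (|B'| + |C'|) * (1 + ‖p‖) := by
        nlinarith [abs_fst_le_one_add_norm p, abs_snd_le_one_add_norm p,
          abs_nonneg B', abs_nonneg C', abs_nonneg p.1, abs_nonneg p.2, norm_nonneg p]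

theorem linear_growth2 (B' C' : ℝ) (p : ℝ × ℝ) :
    |B' * p.2 - C' * p.1| ≤ (|B'| + |C'|) * (1 + ‖p‖) := by
  calc |B' * p.2 - C' * p.1| ≤ |B' * p.2| + |C' * p.1| := abs_sub _ _
    _ = |B'| * |p.2| + |C'| * |p.1| := by rw [abs_mul, abs_mul]
    _ ≤ (|B'| + |C'|) * (1 + ‖p‖) := by
        nlinarith [abs_fst_le_one_add_norm p, abs_snd_le_one_add_norm p,
          abs_nonneg B', abs_nonneg C', abs_nonneg p.1, abs_nonneg p.2, norm_nonneg p]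

/-- growth bound for the divergence integrand -/
theorem growth_div_aux {f g L : ℝ × ℝ → ℝ} {c cL D' : ℝ} {n : ℕ} (hD' : 0 < D')
    (h0 : ∀ p, |f p| ≤ c * (1 + ‖p‖) ^ n) (h1 : ∀ p, |g p| ≤ c * (1 + ‖p‖) ^ n)
    (hL : ∀ p, |L p| ≤ cL * (1 + ‖p‖)) :
    ∀ p, |g p - f p * (L p / D')| ≤ (c + c * (cL / D')) * (1 + ‖p‖) ^ (n + 1) := by
  intro p
  have hc := growth_nonneg h0
  have hcL : 0 ≤ cL := by
    have := le_trans (abs_nonneg (L 0)) (hL 0)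
    simpa using this
  have hn1 : (1:ℝ) ≤ 1 + ‖p‖ := by linarith [norm_nonneg p]
  have hpow : (1 + ‖p‖) ^ n ≤ (1 + ‖p‖) ^ (n + 1) := pow_le_pow_right₀ hn1 (Nat.le_succ n)
  have hb1 : |g p| ≤ c * (1 + ‖p‖) ^ (n + 1) := (h1 p).trans (by gcongr)
  have hq : |L p / D'| ≤ cL / D' * (1 + ‖p‖) := by
    rw [abs_div, abs_of_pos hD']
    calc |L p| / D' ≤ cL * (1 + ‖p‖) / D' := by gcongr; exact hL p
      _ = cL / D' * (1 + ‖p‖) := by ring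
  have hb2 : |f p * (L p / D')| ≤ c * (cL / D') * (1 + ‖p‖) ^ (n + 1) := by
    rw [abs_mul]
    calc |f p| * |L p / D'|
        ≤ (c * (1 + ‖p‖) ^ n) * (cL / D' * (1 + ‖p‖)) :=
          mul_le_mul (h0 p) hq (abs_nonneg _) (by positivity)
      _ = c * (cL / D') * ((1 + ‖p‖) ^ n * (1 + ‖p‖)) := by ring
      _ = c * (cL / D') * (1 + ‖p‖) ^ (n + 1) := by rw [← pow_succ]
  calc |g p - f p * (L p / D')|
      ≤ |g p| + |f p * (L p / D')| := abs_sub _ _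
    _ ≤ c * (1 + ‖p‖) ^ (n + 1) + c * (cL / D') * (1 + ‖p‖) ^ (n + 1) := add_le_add hb1 hb2
    _ = (c + c * (cL / D')) * (1 + ‖p‖) ^ (n + 1) := by ring

theorem div1_zero {A B C : ℝ} (hA : 0 < A) (hB : 0 < B) (hD : 0 < A * B - C ^ 2)
    {f : ℝ × ℝ → ℝ} (hf : ContDiff ℝ 1 f) {c : ℝ} {n : ℕ}
    (h0 : ∀ p, |f p| ≤ c * (1 + ‖p‖) ^ n) (h1 : ∀ p, |pd1 f p| ≤ c * (1 + ‖p‖) ^ n) :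
    ∫ p : ℝ × ℝ, (pd1 f p - f p * ((B * p.1 - C * p.2) / (A * B - C ^ 2))) *
      gaussPdf2 A B C p = 0 := by
  have hdiff : Differentiable ℝ f := hf.differentiable one_ne_zero
  have hpd1c : Continuous (pd1 f) := (contDiff_pd1 (n := 0) hf (by norm_num)).continuous
  have hqc : Continuous (fun p : ℝ × ℝ => pd1 f p - f p * ((B * p.1 - C * p.2) / (A * B - C ^ 2))) :=
    hpd1c.sub (hf.continuous.mul (by fun_prop))
  have hq : ∀ p : ℝ × ℝ, |pd1 f p - f p * ((B * p.1 - C * p.2) / (A * B - C ^ 2))|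
      ≤ (c + c * ((|B| + |C|) / (A * B - C ^ 2))) * (1 + ‖p‖) ^ (n + 1) :=
    growth_div_aux (L := fun p => B * p.1 - C * p.2) hD h0 h1 (linear_growth1 B C)
  have hGint : Integrable (fun p : ℝ × ℝ =>
      (pd1 f p - f p * ((B * p.1 - C * p.2) / (A * B - C ^ 2))) * gaussPdf2 A B C p) :=
    integrable_poly_mul_gaussPdf2 hA hB hD hqc hq
  have key : ∀ y : ℝ, ∫ x : ℝ,
      (pd1 f (x, y) - f (x, y) * ((B * (x, y).1 - C * (x, y).2) / (A * B - C ^ 2))) *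
        gaussPdf2 A B C (x, y) = 0 := by
    intro y
    have hslice : Integrable (fun x : ℝ =>
        (pd1 f (x, y) - f (x, y) * ((B * (x, y).1 - C * (x, y).2) / (A * B - C ^ 2))) *
          gaussPdf2 A B C (x, y)) := integrable_slice_fst hA hB hD hqc hq y
    have hW : ∀ x : ℝ, HasDerivAt (fun t => f (t, y) * gaussPdf2 A B C (t, y))
        ((pd1 f (x, y) - f (x, y) * ((B * (x, y).1 - C * (x, y).2) / (A * B - C ^ 2))) *
          gaussPdf2 A B C (x, y)) x := by
      intro x
      have h1' := hasDerivAt_pd1 hdiff x y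
      have h2' := hasDerivAt_gaussPdf2_fst (A := A) (B := B) (C := C) x y
      have hmul := h1'.mul h2'
      exact hmul.congr_deriv (by simp only; ring)
    have htop := tendsto_slice_fst hA hB hD h0 y tendsto_abs_atTop_atTop
    have hbot := tendsto_slice_fst hA hB hD h0 y tendsto_abs_atBot_atTop
    have e1 := integral_Iic_of_hasDerivAt_of_tendsto' (a := 0) (fun x _ => hW x)
      hslice.integrableOn hbot
    have e2 := integral_Ioi_of_hasDerivAt_of_tendsto' (a := 0) (fun x _ => hW x)
      hslice.integrableOn htop
    rw [← intervalIntegral.integral_Iic_add_Ioi (b := 0) hslice.integrableOn hslice.integrableOn, e1, e2]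
    ring
  rw [Measure.volume_eq_prod] at hGint ⊢
  rw [integral_prod_symm _ hGint]
  simp only [key, integral_zero]

theorem div2_zero {A B C : ℝ} (hA : 0 < A) (hB : 0 < B) (hD : 0 < A * B - C ^ 2)
    {f : ℝ × ℝ → ℝ} (hf : ContDiff ℝ 1 f) {c : ℝ} {n : ℕ}
    (h0 : ∀ p, |f p| ≤ c * (1 + ‖p‖) ^ n) (h2 : ∀ p, |pd2 f p| ≤ c * (1 + ‖p‖) ^ n) :
    ∫ p : ℝ × ℝ, (pd2 f p - f p * ((A * p.2 - C * p.1) / (A * B - C ^ 2))) *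
      gaussPdf2 A B C p = 0 := by
  have hdiff : Differentiable ℝ f := hf.differentiable one_ne_zero
  have hpd2c : Continuous (pd2 f) := (contDiff_pd2 (n := 0) hf (by norm_num)).continuous
  have hqc : Continuous (fun p : ℝ × ℝ => pd2 f p - f p * ((A * p.2 - C * p.1) / (A * B - C ^ 2))) :=
    hpd2c.sub (hf.continuous.mul (by fun_prop))
  have hq : ∀ p : ℝ × ℝ, |pd2 f p - f p * ((A * p.2 - C * p.1) / (A * B - C ^ 2))|
      ≤ (c + c * ((|A| + |C|) / (A * B - C ^ 2))) * (1 + ‖p‖) ^ (n + 1) :=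
    growth_div_aux (L := fun p => A * p.2 - C * p.1) hD h0 h2 (linear_growth2 A C)
  have hGint : Integrable (fun p : ℝ × ℝ =>
      (pd2 f p - f p * ((A * p.2 - C * p.1) / (A * B - C ^ 2))) * gaussPdf2 A B C p) :=
    integrable_poly_mul_gaussPdf2 hA hB hD hqc hq
  have key : ∀ x : ℝ, ∫ y : ℝ,
      (pd2 f (x, y) - f (x, y) * ((A * (x, y).2 - C * (x, y).1) / (A * B - C ^ 2))) *
        gaussPdf2 A B C (x, y) = 0 := by
    intro x
    have hslice : Integrable (fun y : ℝ =>
        (pd2 f (x, y) - f (x, y) * ((A * (x, y).2 - C * (x, y).1) / (A * B - C ^ 2))) *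
          gaussPdf2 A B C (x, y)) := integrable_slice_snd hA hB hD hqc hq x
    have hW : ∀ y : ℝ, HasDerivAt (fun t => f (x, t) * gaussPdf2 A B C (x, t))
        ((pd2 f (x, y) - f (x, y) * ((A * (x, y).2 - C * (x, y).1) / (A * B - C ^ 2))) *
          gaussPdf2 A B C (x, y)) y := by
      intro y
      have h1' := hasDerivAt_pd2 hdiff x y
      have h2' := hasDerivAt_gaussPdf2_snd (A := A) (B := B) (C := C) x y
      have hmul := h1'.mul h2'
      exact hmul.congr_deriv (by simp only; ring)
    have htop := tendsto_slice_snd hA hB hD h0 x tendsto_abs_atTop_atTop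
    have hbot := tendsto_slice_snd hA hB hD h0 x tendsto_abs_atBot_atTop
    have e1 := integral_Iic_of_hasDerivAt_of_tendsto' (a := 0) (fun y _ => hW y)
      hslice.integrableOn hbot
    have e2 := integral_Ioi_of_hasDerivAt_of_tendsto' (a := 0) (fun y _ => hW y)
      hslice.integrableOn htop
    rw [← intervalIntegral.integral_Iic_add_Ioi (b := 0) hslice.integrableOn hslice.integrableOn, e1, e2]
    ring
  rw [Measure.volume_eq_prod] at hGint ⊢
  rw [integral_prod _ hGint]
  simp only [key, integral_zero]

theorem stein_P1 {A B C : ℝ} (hA : 0 < A) (hB : 0 < B) (hD : 0 < A * B - C ^ 2)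
    {f : ℝ × ℝ → ℝ} (hf : ContDiff ℝ 1 f) {c : ℝ} {n : ℕ}
    (h0 : ∀ p, |f p| ≤ c * (1 + ‖p‖) ^ n) (h1 : ∀ p, |pd1 f p| ≤ c * (1 + ‖p‖) ^ n) :
    (A * B - C ^ 2) * (∫ p : ℝ × ℝ, pd1 f p * gaussPdf2 A B C p) =
      B * (∫ p : ℝ × ℝ, f p * p.1 * gaussPdf2 A B C p)
        - C * (∫ p : ℝ × ℝ, f p * p.2 * gaussPdf2 A B C p) := by
  have hpd1c : Continuous (pd1 f) := (contDiff_pd1 (n := 0) hf (by norm_num)).continuous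
  have hd := div1_zero hA hB hD hf h0 h1
  have hP1 : Integrable (fun p : ℝ × ℝ => pd1 f p * gaussPdf2 A B C p) :=
    integrable_poly_mul_gaussPdf2 hA hB hD hpd1c h1
  have hI1 : Integrable (fun p : ℝ × ℝ => f p * p.1 * gaussPdf2 A B C p) :=
    integrable_poly_mul_gaussPdf2 hA hB hD (hf.continuous.mul continuous_fst) (growth_mul_fst h0)
  have hI2 : Integrable (fun p : ℝ × ℝ => f p * p.2 * gaussPdf2 A B C p) :=
    integrable_poly_mul_gaussPdf2 hA hB hD (hf.continuous.mul continuous_snd) (growth_mul_snd h0)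
  rw [show (fun p : ℝ × ℝ => (pd1 f p - f p * ((B * p.1 - C * p.2) / (A * B - C ^ 2))) *
      gaussPdf2 A B C p)
      = fun p : ℝ × ℝ => pd1 f p * gaussPdf2 A B C p -
          ((B / (A * B - C ^ 2)) * (f p * p.1 * gaussPdf2 A B C p) -
            (C / (A * B - C ^ 2)) * (f p * p.2 * gaussPdf2 A B C p)) from
        funext fun p => by ring] at hd
  have hYZ : Integrable (fun p : ℝ × ℝ =>
      B / (A * B - C ^ 2) * (f p * p.1 * gaussPdf2 A B C p) -
        C / (A * B - C ^ 2) * (f p * p.2 * gaussPdf2 A B C p)) :=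
    (hI1.const_mul _).sub (hI2.const_mul _)
  rw [integral_sub hP1 hYZ,
    integral_sub (hI1.const_mul _) (hI2.const_mul _), integral_const_mul,
    integral_const_mul] at hd
  have hDne : (A * B - C ^ 2) ≠ 0 := ne_of_gt hD
  field_simp at hd
  rw [sub_eq_zero, eq_div_iff (by rw [mul_comm]; exact hDne)] at hd
  linear_combination hd

theorem stein_P2 {A B C : ℝ} (hA : 0 < A) (hB : 0 < B) (hD : 0 < A * B - C ^ 2)
    {f : ℝ × ℝ → ℝ} (hf : ContDiff ℝ 1 f) {c : ℝ} {n : ℕ}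
    (h0 : ∀ p, |f p| ≤ c * (1 + ‖p‖) ^ n) (h2 : ∀ p, |pd2 f p| ≤ c * (1 + ‖p‖) ^ n) :
    (A * B - C ^ 2) * (∫ p : ℝ × ℝ, pd2 f p * gaussPdf2 A B C p) =
      A * (∫ p : ℝ × ℝ, f p * p.2 * gaussPdf2 A B C p)
        - C * (∫ p : ℝ × ℝ, f p * p.1 * gaussPdf2 A B C p) := by
  have hpd2c : Continuous (pd2 f) := (contDiff_pd2 (n := 0) hf (by norm_num)).continuous
  have hd := div2_zero hA hB hD hf h0 h2
  have hP2 : Integrable (fun p : ℝ × ℝ => pd2 f p * gaussPdf2 A B C p) :=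
    integrable_poly_mul_gaussPdf2 hA hB hD hpd2c h2
  have hI1 : Integrable (fun p : ℝ × ℝ => f p * p.1 * gaussPdf2 A B C p) :=
    integrable_poly_mul_gaussPdf2 hA hB hD (hf.continuous.mul continuous_fst) (growth_mul_fst h0)
  have hI2 : Integrable (fun p : ℝ × ℝ => f p * p.2 * gaussPdf2 A B C p) :=
    integrable_poly_mul_gaussPdf2 hA hB hD (hf.continuous.mul continuous_snd) (growth_mul_snd h0)
  rw [show (fun p : ℝ × ℝ => (pd2 f p - f p * ((A * p.2 - C * p.1) / (A * B - C ^ 2))) *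
      gaussPdf2 A B C p)
      = fun p : ℝ × ℝ => pd2 f p * gaussPdf2 A B C p -
          ((A / (A * B - C ^ 2)) * (f p * p.2 * gaussPdf2 A B C p) -
            (C / (A * B - C ^ 2)) * (f p * p.1 * gaussPdf2 A B C p)) from
        funext fun p => by ring] at hd
  have hYZ : Integrable (fun p : ℝ × ℝ =>
      A / (A * B - C ^ 2) * (f p * p.2 * gaussPdf2 A B C p) -
        C / (A * B - C ^ 2) * (f p * p.1 * gaussPdf2 A B C p)) :=
    (hI2.const_mul _).sub (hI1.const_mul _)
  rw [integral_sub hP2 hYZ,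
    integral_sub (hI2.const_mul _) (hI1.const_mul _), integral_const_mul,
    integral_const_mul] at hd
  have hDne : (A * B - C ^ 2) ≠ 0 := ne_of_gt hD
  field_simp at hd
  linear_combination hd

theorem stein_vol1 {A B C : ℝ} (hA : 0 < A) (hB : 0 < B) (hD : 0 < A * B - C ^ 2)
    {f : ℝ × ℝ → ℝ} (hf : ContDiff ℝ 1 f) {c : ℝ} {n : ℕ}
    (h0 : ∀ p, |f p| ≤ c * (1 + ‖p‖) ^ n) (h1 : ∀ p, |pd1 f p| ≤ c * (1 + ‖p‖) ^ n)
    (h2 : ∀ p, |pd2 f p| ≤ c * (1 + ‖p‖) ^ n) :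
    ∫ p : ℝ × ℝ, f p * p.1 * gaussPdf2 A B C p =
      A * (∫ p : ℝ × ℝ, pd1 f p * gaussPdf2 A B C p)
        + C * (∫ p : ℝ × ℝ, pd2 f p * gaussPdf2 A B C p) := by
  have e1 := stein_P1 hA hB hD hf h0 h1
  have e2 := stein_P2 hA hB hD hf h0 h2
  have hDne : (A * B - C ^ 2) ≠ 0 := ne_of_gt hD
  have key : (A * B - C ^ 2) * (∫ p : ℝ × ℝ, f p * p.1 * gaussPdf2 A B C p)
      = (A * B - C ^ 2) * (A * (∫ p : ℝ × ℝ, pd1 f p * gaussPdf2 A B C p)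
        + C * (∫ p : ℝ × ℝ, pd2 f p * gaussPdf2 A B C p)) := by
    linear_combination -A * e1 - C * e2
  exact mul_left_cancel₀ hDne key

theorem stein_vol2 {A B C : ℝ} (hA : 0 < A) (hB : 0 < B) (hD : 0 < A * B - C ^ 2)
    {f : ℝ × ℝ → ℝ} (hf : ContDiff ℝ 1 f) {c : ℝ} {n : ℕ}
    (h0 : ∀ p, |f p| ≤ c * (1 + ‖p‖) ^ n) (h1 : ∀ p, |pd1 f p| ≤ c * (1 + ‖p‖) ^ n)
    (h2 : ∀ p, |pd2 f p| ≤ c * (1 + ‖p‖) ^ n) :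
    ∫ p : ℝ × ℝ, f p * p.2 * gaussPdf2 A B C p =
      C * (∫ p : ℝ × ℝ, pd1 f p * gaussPdf2 A B C p)
        + B * (∫ p : ℝ × ℝ, pd2 f p * gaussPdf2 A B C p) := by
  have e1 := stein_P1 hA hB hD hf h0 h1
  have e2 := stein_P2 hA hB hD hf h0 h2
  have hDne : (A * B - C ^ 2) ≠ 0 := ne_of_gt hD
  have key : (A * B - C ^ 2) * (∫ p : ℝ × ℝ, f p * p.2 * gaussPdf2 A B C p)
      = (A * B - C ^ 2) * (C * (∫ p : ℝ × ℝ, pd1 f p * gaussPdf2 A B C p)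
        + B * (∫ p : ℝ × ℝ, pd2 f p * gaussPdf2 A B C p)) := by
    linear_combination -C * e1 - B * e2
  exact mul_left_cancel₀ hDne key

/-- product rules -/
theorem pd1_mul_sq {f : ℝ × ℝ → ℝ} (hf : Differentiable ℝ f) :
    pd1 (fun p => f p * p.2 ^ 2) = fun p => pd1 f p * p.2 ^ 2 := by
  funext p
  exact ((hasDerivAt_pd1 hf p.1 p.2).mul_const (p.2 ^ 2)).deriv

theorem pd1_mul_lin {f : ℝ × ℝ → ℝ} (hf : Differentiable ℝ f) :
    pd1 (fun p => f p * p.2) = fun p => pd1 f p * p.2 := by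
  funext p
  exact ((hasDerivAt_pd1 hf p.1 p.2).mul_const p.2).deriv

theorem pd2_mul_sq {f : ℝ × ℝ → ℝ} (hf : Differentiable ℝ f) :
    pd2 (fun p => f p * p.2 ^ 2) = fun p => pd2 f p * p.2 ^ 2 + f p * (2 * p.2) := by
  funext p
  have h := ((hasDerivAt_pd2 hf p.1 p.2).mul (hasDerivAt_pow 2 p.2)).deriv
  simp only [Pi.mul_def] at h
  rw [show pd2 (fun p : ℝ × ℝ => f p * p.2 ^ 2) p
      = deriv (fun t => f (p.1, t) * t ^ 2) p.2 from rfl, h]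
  norm_num

theorem pd2_mul_lin {f : ℝ × ℝ → ℝ} (hf : Differentiable ℝ f) :
    pd2 (fun p => f p * p.2) = fun p => pd2 f p * p.2 + f p := by
  funext p
  have h := ((hasDerivAt_pd2 hf p.1 p.2).mul (hasDerivAt_id' p.2)).deriv
  simp only [Pi.mul_def] at h
  rw [show pd2 (fun p : ℝ × ℝ => f p * p.2) p
      = deriv (fun t => f (p.1, t) * t) p.2 from rfl, h]
  simp


theorem integral_gaussMeasure2 {A B C : ℝ} (hD : 0 < A * B - C ^ 2) (h : ℝ × ℝ → ℝ) :
    ∫ p, h p ∂(gaussMeasure2 A B C) = ∫ p, h p * gaussPdf2 A B C p := by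
  rw [gaussMeasure2]
  rw [show (fun p : ℝ × ℝ => ENNReal.ofReal (gaussPdf2 A B C p))
      = (fun p : ℝ × ℝ => ((Real.toNNReal (gaussPdf2 A B C p) : NNReal) : ENNReal)) from rfl]
  rw [integral_withDensity_eq_integral_smul
      ((gaussPdf2_continuous A B C).measurable.real_toNNReal) h]
  congr 1
  funext p
  rw [NNReal.smul_def, Real.coe_toNNReal _ (gaussPdf2_pos hD p).le, smul_eq_mul, mul_comm]

theorem growth_convert {E : Type*} [NormedAddCommGroup E] {F : ℝ × ℝ → E} {c k : ℝ}
    (h : ∀ p, ‖F p‖ ≤ c * (1 + ‖p‖) ^ k) {c' : ℝ} {m : ℕ} (hc : c ≤ c') (hk : k ≤ (m : ℝ)) :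
    ∀ p, ‖F p‖ ≤ c' * (1 + ‖p‖) ^ m := by
  intro p
  have h1 : (1:ℝ) ≤ 1 + ‖p‖ := by linarith [norm_nonneg p]
  have hc0 : 0 ≤ c := by
    have := le_trans (norm_nonneg (F 0)) (h 0)
    simpa using this
  calc ‖F p‖ ≤ c * (1 + ‖p‖) ^ k := h p
    _ ≤ c' * (1 + ‖p‖) ^ (m:ℝ) :=
        mul_le_mul hc (Real.rpow_le_rpow_of_exponent_le h1 hk)
          (Real.rpow_nonneg (by linarith) _) (hc0.trans hc)
    _ = c' * (1 + ‖p‖) ^ m := by rw [Real.rpow_natCast]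

theorem growth_raise {F : ℝ × ℝ → ℝ} {c : ℝ} {n n' : ℕ}
    (h : ∀ p, |F p| ≤ c * (1 + ‖p‖) ^ n) (hn : n ≤ n') :
    ∀ p, |F p| ≤ c * (1 + ‖p‖) ^ n' := by
  intro p
  have hc := growth_nonneg h
  have h1 : (1:ℝ) ≤ 1 + ‖p‖ := by linarith [norm_nonneg p]
  exact (h p).trans (mul_le_mul_of_nonneg_left (pow_le_pow_right₀ h1 hn) hc)

theorem growth_mono_const {F : ℝ × ℝ → ℝ} {c c' : ℝ} {n : ℕ}
    (h : ∀ p, |F p| ≤ c * (1 + ‖p‖) ^ n) (hcc : c ≤ c') :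
    ∀ p, |F p| ≤ c' * (1 + ‖p‖) ^ n := fun p =>
  (h p).trans (mul_le_mul_of_nonneg_right hcc (by positivity))

theorem growth_add {F G : ℝ × ℝ → ℝ} {c c' : ℝ} {n : ℕ}
    (hF : ∀ p, |F p| ≤ c * (1 + ‖p‖) ^ n) (hG : ∀ p, |G p| ≤ c' * (1 + ‖p‖) ^ n) :
    ∀ p, |F p + G p| ≤ (c + c') * (1 + ‖p‖) ^ n := fun p =>
  (abs_add_le _ _).trans (by linarith [hF p, hG p])

theorem growth_mul_snd_sq {f : ℝ × ℝ → ℝ} {c : ℝ} {n : ℕ}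
    (h0 : ∀ p, |f p| ≤ c * (1 + ‖p‖) ^ n) :
    ∀ p, |f p * p.2 ^ 2| ≤ c * (1 + ‖p‖) ^ (n + 2) := by
  intro p
  have := growth_mul_snd (growth_mul_snd h0) p
  calc |f p * p.2 ^ 2| = |f p * p.2 * p.2| := by rw [show f p * p.2 ^ 2 = f p * p.2 * p.2 by ring]
    _ ≤ c * (1 + ‖p‖) ^ (n + 1 + 1) := this
    _ = c * (1 + ‖p‖) ^ (n + 2) := by norm_num

theorem growth_two_snd {f : ℝ × ℝ → ℝ} {c : ℝ} {n : ℕ}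
    (h0 : ∀ p, |f p| ≤ c * (1 + ‖p‖) ^ n) :
    ∀ p, |f p * (2 * p.2)| ≤ 2 * c * (1 + ‖p‖) ^ (n + 1) := by
  intro p
  have := growth_mul_snd h0 p
  calc |f p * (2 * p.2)| = 2 * |f p * p.2| := by
        rw [show f p * (2 * p.2) = 2 * (f p * p.2) by ring, abs_mul, abs_two]
    _ ≤ 2 * (c * (1 + ‖p‖) ^ (n + 1)) := by linarith
    _ = 2 * c * (1 + ‖p‖) ^ (n + 1) := by ring

theorem stein_example_bivariate (σ₁ σ₂ C₁₂ : ℝ) (hσ₁ : 0 < σ₁) (hσ₂ : 0 < σ₂)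
    (hdet : 0 < σ₁ ^ 2 * σ₂ ^ 2 - C₁₂ ^ 2) (g : ℝ × ℝ → ℝ) (hg : ContDiff ℝ 3 g)
    (hgrowth : ∀ i ≤ 3, ∃ c k : ℝ, ∀ p, ‖iteratedFDeriv ℝ i g p‖ ≤ c * (1 + ‖p‖) ^ k) :
    ∫ p, g p * p.1 * p.2 ^ 2 ∂(gaussMeasure2 (σ₁ ^ 2) (σ₂ ^ 2) C₁₂) =
      (σ₁ ^ 2 * σ₂ ^ 2 + 2 * C₁₂ ^ 2) * ∫ p, pd1 g p ∂(gaussMeasure2 (σ₁ ^ 2) (σ₂ ^ 2) C₁₂)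
      + 3 * σ₂ ^ 2 * C₁₂ * ∫ p, pd2 g p ∂(gaussMeasure2 (σ₁ ^ 2) (σ₂ ^ 2) C₁₂)
      + (2 * σ₁ ^ 2 * σ₂ ^ 2 * C₁₂ + C₁₂ ^ 3) *
          ∫ p, pd1 (pd1 (pd2 g)) p ∂(gaussMeasure2 (σ₁ ^ 2) (σ₂ ^ 2) C₁₂)
      + (σ₁ ^ 2 * σ₂ ^ 4 + 2 * σ₂ ^ 2 * C₁₂ ^ 2) *
          ∫ p, pd1 (pd2 (pd2 g)) p ∂(gaussMeasure2 (σ₁ ^ 2) (σ₂ ^ 2) C₁₂)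
      + σ₁ ^ 2 * C₁₂ ^ 2 * ∫ p, pd1 (pd1 (pd1 g)) p ∂(gaussMeasure2 (σ₁ ^ 2) (σ₂ ^ 2) C₁₂)
      + σ₂ ^ 4 * C₁₂ * ∫ p, pd2 (pd2 (pd2 g)) p ∂(gaussMeasure2 (σ₁ ^ 2) (σ₂ ^ 2) C₁₂) := by
  have hA : 0 < σ₁ ^ 2 := by positivity
  have hB : 0 < σ₂ ^ 2 := by positivity
  obtain ⟨c0, k0, hgr0⟩ := hgrowth 0 (by norm_num)
  obtain ⟨c1, k1, hgr1⟩ := hgrowth 1 (by norm_num)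
  obtain ⟨c2, k2, hgr2⟩ := hgrowth 2 (by norm_num)
  obtain ⟨c3, k3, hgr3⟩ := hgrowth 3 (by norm_num)
  set cc := max (max c0 c1) (max c2 c3) with hccdef
  set m := max (max ⌈k0⌉₊ ⌈k1⌉₊) (max ⌈k2⌉₊ ⌈k3⌉₊) with hmdef
  have Hk0 : k0 ≤ (m : ℝ) := le_trans (Nat.le_ceil k0)
    (by exact_mod_cast le_trans (le_max_left _ _) (le_max_left _ _))
  have Hk1 : k1 ≤ (m : ℝ) := le_trans (Nat.le_ceil k1)
    (by exact_mod_cast le_trans (le_max_right _ _) (le_max_left _ _))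
  have Hk2 : k2 ≤ (m : ℝ) := le_trans (Nat.le_ceil k2)
    (by exact_mod_cast le_trans (le_max_left _ _) (le_max_right _ _))
  have Hk3 : k3 ≤ (m : ℝ) := le_trans (Nat.le_ceil k3)
    (by exact_mod_cast le_trans (le_max_right _ _) (le_max_right _ _))
  have Hc0 : c0 ≤ cc := le_trans (le_max_left _ _) (le_max_left _ _)
  have Hc1 : c1 ≤ cc := le_trans (le_max_right _ _) (le_max_left _ _)
  have Hc2 : c2 ≤ cc := le_trans (le_max_left _ _) (le_max_right _ _)
  have Hc3 : c3 ≤ cc := le_trans (le_max_right _ _) (le_max_right _ _)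
  have H0 : ∀ p, |g p| ≤ cc * (1 + ‖p‖) ^ m := by
    intro p
    have := growth_convert hgr0 Hc0 Hk0 p
    simpa [norm_iteratedFDeriv_zero] using this
  have H1 : ∀ p, ‖iteratedFDeriv ℝ 1 g p‖ ≤ cc * (1 + ‖p‖) ^ m := growth_convert hgr1 Hc1 Hk1
  have H2 : ∀ p, ‖iteratedFDeriv ℝ 2 g p‖ ≤ cc * (1 + ‖p‖) ^ m := growth_convert hgr2 Hc2 Hk2
  have H3 : ∀ p, ‖iteratedFDeriv ℝ 3 g p‖ ≤ cc * (1 + ‖p‖) ^ m := growth_convert hgr3 Hc3 Hk3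
  have hcc0 : 0 ≤ cc := growth_nonneg H0
  -- differentiability
  have hgd : Differentiable ℝ g := hg.differentiable (by norm_num)
  have hg1 : ContDiff ℝ 1 g := hg.of_le (by norm_num)
  have hp1 : ContDiff ℝ 2 (pd1 g) := contDiff_pd1 (n := 2) hg (by norm_num)
  have hp2 : ContDiff ℝ 2 (pd2 g) := contDiff_pd2 (n := 2) hg (by norm_num)
  have hp1d : Differentiable ℝ (pd1 g) := hp1.differentiable (by norm_num)
  have hp2d : Differentiable ℝ (pd2 g) := hp2.differentiable (by norm_num)
  have hp11 : ContDiff ℝ 1 (pd1 (pd1 g)) := contDiff_pd1 (n := 1) hp1 (by norm_num)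
  have hp12 : ContDiff ℝ 1 (pd1 (pd2 g)) := contDiff_pd1 (n := 1) hp2 (by norm_num)
  have hp22 : ContDiff ℝ 1 (pd2 (pd2 g)) := contDiff_pd2 (n := 1) hp2 (by norm_num)
  -- growth bounds for partial derivatives
  have B1 : ∀ p, |pd1 g p| ≤ cc * (1 + ‖p‖) ^ m := fun p => (abs_pd1_le hgd p).trans (H1 p)
  have B2 : ∀ p, |pd2 g p| ≤ cc * (1 + ‖p‖) ^ m := fun p => (abs_pd2_le hgd p).trans (H1 p)
  have B11 : ∀ p, |pd1 (pd1 g) p| ≤ cc * (1 + ‖p‖) ^ m := fun p =>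
    (abs_pd1_le hp1d p).trans ((norm_iteratedFDeriv_pd1_le (n := 1) hg (by norm_num) p).trans (H2 p))
  have B21 : ∀ p, |pd2 (pd1 g) p| ≤ cc * (1 + ‖p‖) ^ m := fun p =>
    (abs_pd2_le hp1d p).trans ((norm_iteratedFDeriv_pd1_le (n := 1) hg (by norm_num) p).trans (H2 p))
  have B12 : ∀ p, |pd1 (pd2 g) p| ≤ cc * (1 + ‖p‖) ^ m := fun p =>
    (abs_pd1_le hp2d p).trans ((norm_iteratedFDeriv_pd2_le (n := 1) hg (by norm_num) p).trans (H2 p))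
  have B22 : ∀ p, |pd2 (pd2 g) p| ≤ cc * (1 + ‖p‖) ^ m := fun p =>
    (abs_pd2_le hp2d p).trans ((norm_iteratedFDeriv_pd2_le (n := 1) hg (by norm_num) p).trans (H2 p))
  have B111 : ∀ p, |pd1 (pd1 (pd1 g)) p| ≤ cc * (1 + ‖p‖) ^ m := fun p =>
    (abs_pd1_le (hp11.differentiable one_ne_zero) p).trans
      ((norm_iteratedFDeriv_pd1_le (n := 1) hp1 (by norm_num) p).trans
        ((norm_iteratedFDeriv_pd1_le (n := 2) hg (by norm_num) p).trans (H3 p)))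
  have B211 : ∀ p, |pd2 (pd1 (pd1 g)) p| ≤ cc * (1 + ‖p‖) ^ m := fun p =>
    (abs_pd2_le (hp11.differentiable one_ne_zero) p).trans
      ((norm_iteratedFDeriv_pd1_le (n := 1) hp1 (by norm_num) p).trans
        ((norm_iteratedFDeriv_pd1_le (n := 2) hg (by norm_num) p).trans (H3 p)))
  have B112 : ∀ p, |pd1 (pd1 (pd2 g)) p| ≤ cc * (1 + ‖p‖) ^ m := fun p =>
    (abs_pd1_le (hp12.differentiable one_ne_zero) p).trans
      ((norm_iteratedFDeriv_pd1_le (n := 1) hp2 (by norm_num) p).trans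
        ((norm_iteratedFDeriv_pd2_le (n := 2) hg (by norm_num) p).trans (H3 p)))
  have B212 : ∀ p, |pd2 (pd1 (pd2 g)) p| ≤ cc * (1 + ‖p‖) ^ m := fun p =>
    (abs_pd2_le (hp12.differentiable one_ne_zero) p).trans
      ((norm_iteratedFDeriv_pd1_le (n := 1) hp2 (by norm_num) p).trans
        ((norm_iteratedFDeriv_pd2_le (n := 2) hg (by norm_num) p).trans (H3 p)))
  have B122 : ∀ p, |pd1 (pd2 (pd2 g)) p| ≤ cc * (1 + ‖p‖) ^ m := fun p =>
    (abs_pd1_le (hp22.differentiable one_ne_zero) p).trans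
      ((norm_iteratedFDeriv_pd2_le (n := 1) hp2 (by norm_num) p).trans
        ((norm_iteratedFDeriv_pd2_le (n := 2) hg (by norm_num) p).trans (H3 p)))
  have B222 : ∀ p, |pd2 (pd2 (pd2 g)) p| ≤ cc * (1 + ‖p‖) ^ m := fun p =>
    (abs_pd2_le (hp22.differentiable one_ne_zero) p).trans
      ((norm_iteratedFDeriv_pd2_le (n := 1) hp2 (by norm_num) p).trans
        ((norm_iteratedFDeriv_pd2_le (n := 2) hg (by norm_num) p).trans (H3 p)))
  -- symmetry of mixed partials
  have sym_g : pd1 (pd2 g) = pd2 (pd1 g) := pd_comm hg (by norm_num)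
  have chain112 : pd2 (pd1 (pd1 g)) = pd1 (pd1 (pd2 g)) :=
    (pd_comm hp1 (by norm_num)).symm.trans (congrArg pd1 sym_g.symm)
  -- integrable pieces
  have hI1int : Integrable (fun p : ℝ × ℝ => pd1 g p * gaussPdf2 (σ₁ ^ 2) (σ₂ ^ 2) C₁₂ p) :=
    integrable_poly_mul_gaussPdf2 hA hB hdet hp1.continuous B1
  have hI2int : Integrable (fun p : ℝ × ℝ => pd2 g p * gaussPdf2 (σ₁ ^ 2) (σ₂ ^ 2) C₁₂ p) :=
    integrable_poly_mul_gaussPdf2 hA hB hdet hp2.continuous B2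
  have hVint : Integrable (fun p : ℝ × ℝ => g p * p.2 * gaussPdf2 (σ₁ ^ 2) (σ₂ ^ 2) C₁₂ p) :=
    integrable_poly_mul_gaussPdf2 hA hB hdet (hg.continuous.mul continuous_snd)
      (growth_mul_snd H0)
  have hU2int : Integrable (fun p : ℝ × ℝ => pd2 g p * p.2 ^ 2 * gaussPdf2 (σ₁ ^ 2) (σ₂ ^ 2) C₁₂ p) :=
    integrable_poly_mul_gaussPdf2 hA hB hdet (hp2.continuous.mul (continuous_snd.pow 2))
      (growth_mul_snd_sq B2)
  have hW12int : Integrable (fun p : ℝ × ℝ => pd1 (pd2 g) p * p.2 * gaussPdf2 (σ₁ ^ 2) (σ₂ ^ 2) C₁₂ p) :=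
    integrable_poly_mul_gaussPdf2 hA hB hdet (hp12.continuous.mul continuous_snd)
      (growth_mul_snd B12)
  have hW22int : Integrable (fun p : ℝ × ℝ => pd2 (pd2 g) p * p.2 * gaussPdf2 (σ₁ ^ 2) (σ₂ ^ 2) C₁₂ p) :=
    integrable_poly_mul_gaussPdf2 hA hB hdet (hp22.continuous.mul continuous_snd)
      (growth_mul_snd B22)
  -- the seven Stein identities
  have e1 := stein_vol1 (f := fun p : ℝ × ℝ => g p * p.2 ^ 2) hA hB hdet
    (hg1.mul (contDiff_snd.pow 2))
    (growth_mono_const (growth_mul_snd_sq H0) (show cc ≤ 3 * cc by linarith))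
    (by
      intro p
      rw [pd1_mul_sq hgd]
      exact growth_mono_const (growth_mul_snd_sq B1) (show cc ≤ 3 * cc by linarith) p)
    (by
      intro p
      rw [pd2_mul_sq hgd]
      exact growth_mono_const
        (growth_add (growth_mul_snd_sq B2) (growth_raise (growth_two_snd H0) (Nat.le_succ _)))
        (show cc + 2 * cc ≤ 3 * cc by linarith) p)
  have e2 := stein_vol2 (f := fun p : ℝ × ℝ => pd1 g p * p.2) hA hB hdet
    ((hp1.of_le (by norm_num)).mul contDiff_snd)
    (growth_mono_const (growth_raise (growth_mul_snd B1) (Nat.le_succ _))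
      (show cc ≤ 3 * cc by linarith))
    (by
      intro p
      rw [pd1_mul_lin hp1d]
      exact growth_mono_const (growth_raise (growth_mul_snd B11) (Nat.le_succ _))
        (show cc ≤ 3 * cc by linarith) p)
    (by
      intro p
      rw [pd2_mul_lin hp1d]
      exact growth_mono_const
        (growth_raise (growth_add (growth_mul_snd B21) (growth_raise B1 (Nat.le_succ _)))
          (Nat.le_succ _))
        (show cc + cc ≤ 3 * cc by linarith) p)
  have e3 := stein_vol2 (f := fun p : ℝ × ℝ => pd2 g p * p.2) hA hB hdet
    ((hp2.of_le (by norm_num)).mul contDiff_snd)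
    (growth_mono_const (growth_raise (growth_mul_snd B2) (Nat.le_succ _))
      (show cc ≤ 3 * cc by linarith))
    (by
      intro p
      rw [pd1_mul_lin hp2d]
      exact growth_mono_const (growth_raise (growth_mul_snd B12) (Nat.le_succ _))
        (show cc ≤ 3 * cc by linarith) p)
    (by
      intro p
      rw [pd2_mul_lin hp2d]
      exact growth_mono_const
        (growth_raise (growth_add (growth_mul_snd B22) (growth_raise B2 (Nat.le_succ _)))
          (Nat.le_succ _))
        (show cc + cc ≤ 3 * cc by linarith) p)
  have e4 := stein_vol2 (f := g) hA hB hdet hg1 H0 B1 B2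
  have e5 := stein_vol2 (f := pd1 (pd1 g)) hA hB hdet hp11 B11 B111 B211
  have e6 := stein_vol2 (f := pd1 (pd2 g)) hA hB hdet hp12 B12 B112 B212
  have e7 := stein_vol2 (f := pd2 (pd2 g)) hA hB hdet hp22 B22 B122 B222
  -- rewrite the composite partial derivatives
  simp only [pd1_mul_sq hgd, pd2_mul_sq hgd] at e1
  simp only [pd1_mul_lin hp1d, pd2_mul_lin hp1d] at e2
  simp only [pd1_mul_lin hp2d, pd2_mul_lin hp2d] at e3
  rw [← sym_g] at e2
  rw [chain112] at e5
  rw [← pd_comm hp2 (by norm_num)] at e6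
  -- normalize integrands and split sums
  rw [show (fun p : ℝ × ℝ => (pd2 g p * p.2 ^ 2 + g p * (2 * p.2)) *
        gaussPdf2 (σ₁ ^ 2) (σ₂ ^ 2) C₁₂ p)
      = fun p : ℝ × ℝ => pd2 g p * p.2 ^ 2 * gaussPdf2 (σ₁ ^ 2) (σ₂ ^ 2) C₁₂ p
          + 2 * (g p * p.2 * gaussPdf2 (σ₁ ^ 2) (σ₂ ^ 2) C₁₂ p) from
      funext fun p => by ring] at e1
  rw [integral_add hU2int (hVint.const_mul 2), integral_const_mul] at e1
  rw [show (fun p : ℝ × ℝ => pd1 g p * p.2 * p.2 * gaussPdf2 (σ₁ ^ 2) (σ₂ ^ 2) C₁₂ p)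
      = fun p : ℝ × ℝ => pd1 g p * p.2 ^ 2 * gaussPdf2 (σ₁ ^ 2) (σ₂ ^ 2) C₁₂ p from
      funext fun p => by ring] at e2
  rw [show (fun p : ℝ × ℝ => (pd1 (pd2 g) p * p.2 + pd1 g p) *
        gaussPdf2 (σ₁ ^ 2) (σ₂ ^ 2) C₁₂ p)
      = fun p : ℝ × ℝ => pd1 (pd2 g) p * p.2 * gaussPdf2 (σ₁ ^ 2) (σ₂ ^ 2) C₁₂ p
          + pd1 g p * gaussPdf2 (σ₁ ^ 2) (σ₂ ^ 2) C₁₂ p from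
      funext fun p => by ring] at e2
  rw [integral_add hW12int hI1int] at e2
  rw [show (fun p : ℝ × ℝ => pd2 g p * p.2 * p.2 * gaussPdf2 (σ₁ ^ 2) (σ₂ ^ 2) C₁₂ p)
      = fun p : ℝ × ℝ => pd2 g p * p.2 ^ 2 * gaussPdf2 (σ₁ ^ 2) (σ₂ ^ 2) C₁₂ p from
      funext fun p => by ring] at e3
  rw [show (fun p : ℝ × ℝ => (pd2 (pd2 g) p * p.2 + pd2 g p) *
        gaussPdf2 (σ₁ ^ 2) (σ₂ ^ 2) C₁₂ p)
      = fun p : ℝ × ℝ => pd2 (pd2 g) p * p.2 * gaussPdf2 (σ₁ ^ 2) (σ₂ ^ 2) C₁₂ p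
          + pd2 g p * gaussPdf2 (σ₁ ^ 2) (σ₂ ^ 2) C₁₂ p from
      funext fun p => by ring] at e3
  rw [integral_add hW22int hI2int] at e3
  -- convert measure integrals to weighted volume integrals
  simp only [integral_gaussMeasure2 hdet]
  rw [show (fun p : ℝ × ℝ => g p * p.1 * p.2 ^ 2 * gaussPdf2 (σ₁ ^ 2) (σ₂ ^ 2) C₁₂ p)
      = fun p : ℝ × ℝ => g p * p.2 ^ 2 * p.1 * gaussPdf2 (σ₁ ^ 2) (σ₂ ^ 2) C₁₂ p from
      funext fun p => by ring]
  linear_combination e1 + σ₁ ^ 2 * e2 + C₁₂ * e3 + 2 * C₁₂ * e4 + σ₁ ^ 2 * C₁₂ * e5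
    + (σ₁ ^ 2 * σ₂ ^ 2 + C₁₂ ^ 2) * e6 + C₁₂ * σ₂ ^ 2 * e7
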